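/- In an infinite-dimensional complete metric linear space, every compact set is shy. -/

import Mathlib

open MeasureTheory Pointwise

/-- A Borel set `S` is *shy* if there is a compactly supported Borel probability
measure `μ` such that every translate of `S` has `μ`-measure zero. -/
def IsShyBorel {X : Type*} [AddGroup X] [TopologicalSpace X] [MeasurableSpace X]
    (S : Set X) : Prop :=
  MeasurableSet S ∧ ∃ μ : Measure X, IsProbabilityMeasure μ ∧
    (∃ K : Set X, IsCompact K ∧ μ Kᶜ = 0) ∧ ∀ x : X, μ ((· + x) '' S) = 0

/-- A set is *shy* if it is contained in a shy Borel set. -/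
def IsShy {X : Type*} [AddGroup X] [TopologicalSpace X] [MeasurableSpace X]
    (S : Set X) : Prop :=
  ∃ T, S ⊆ T ∧ IsShyBorel T

/-- A set is *prevalent* if its complement is shy. -/
def Prevalent {X : Type*} [AddGroup X] [TopologicalSpace X] [MeasurableSpace X]
    (S : Set X) : Prop :=
  IsShy Sᶜ

section Aux

variable {X : Type*} [AddCommGroup X] [Module ℝ X] [MetricSpace X]
  [IsTopologicalAddGroup X] [ContinuousSMul ℝ X]

/-- Small scalar multiples of a compact set are uniformly small. -/
lemma smul_small_compact (U : Set X) (hU : IsCompact U) {V : Set X} (hV : V ∈ nhds (0:X)) :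
    ∃ ε > (0:ℝ), ∀ c : ℝ, |c| < ε → ∀ y ∈ U, c • y ∈ V := by
  have hcont : Continuous fun p : ℝ × X => p.1 • p.2 := continuous_smul
  have hopen : IsOpen ((fun p : ℝ × X => p.1 • p.2) ⁻¹' interior V) :=
    isOpen_interior.preimage hcont
  have hsub : ({0} : Set ℝ) ×ˢ U ⊆ (fun p : ℝ × X => p.1 • p.2) ⁻¹' interior V := by
    rintro ⟨c, y⟩ ⟨hc, _⟩
    simp only [Set.mem_singleton_iff] at hc
    simp only [Set.mem_preimage, hc, zero_smul]
    exact mem_interior_iff_mem_nhds.2 hV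
  obtain ⟨u, v, hu, _, h0u, hUv, huv⟩ :=
    generalized_tube_lemma isCompact_singleton hU hopen hsub
  obtain ⟨ε, hε, hball⟩ := Metric.isOpen_iff.1 hu 0 (h0u rfl)
  refine ⟨ε, hε, fun c hc y hy => ?_⟩
  have : (c, y) ∈ u ×ˢ v := ⟨hball (by simpa [Real.dist_eq] using hc), hUv hy⟩
  exact interior_subset (huv this)

/-- Riesz: a compact neighborhood of zero forces finite dimension. -/
lemma riesz_of_compact_nhds (U : Set X) (hU : IsCompact U)
    (h0 : U ∈ nhds (0:X)) : FiniteDimensional ℝ X := by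
  classical
  have halfU : (2⁻¹ : ℝ) • U ∈ nhds (0 : X) := by
    rwa [set_smul_mem_nhds_zero_iff (by norm_num : (2⁻¹:ℝ) ≠ 0)]
  -- cover U by translates of (2⁻¹) • U
  have hnbhd : ∀ x : X, {y : X | y - x ∈ (2⁻¹:ℝ) • U} ∈ nhds x := by
    intro x
    have : ContinuousAt (fun y : X => y - x) x := (continuous_id.sub continuous_const).continuousAt
    have := this.preimage_mem_nhds (by simpa using halfU)
    simpa [Set.preimage] using this
  obtain ⟨t, _, htcov⟩ := hU.elim_nhds_subcover (fun x => {y : X | y - x ∈ (2⁻¹:ℝ) • U})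
    (fun x _ => hnbhd x)
  set F : Submodule ℝ X := Submodule.span ℝ (t : Set X) with hF
  have hFfin : FiniteDimensional ℝ F := FiniteDimensional.span_finset ℝ t
  have hFclosed : IsClosed (F : Set X) := F.closed_of_finiteDimensional
  -- iterate the covering
  have key : ∀ u ∈ U, ∀ n : ℕ, ∃ f ∈ F, ∃ w ∈ U, u = f + ((2:ℝ)⁻¹) ^ n • w := by
    intro u hu n
    induction n with
    | zero => exact ⟨0, F.zero_mem, u, hu, by simp⟩
    | succ n ih =>
      obtain ⟨f, hf, w, hw, hwe⟩ := ih
      have := htcov hw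
      simp only [Set.mem_iUnion, Set.mem_setOf_eq] at this
      obtain ⟨x, hxt, hwx⟩ := this
      obtain ⟨w', hw', hw'e⟩ := hwx
      refine ⟨f + ((2:ℝ)⁻¹) ^ n • x, F.add_mem hf (F.smul_mem _ (Submodule.subset_span hxt)),
        w', hw', ?_⟩
      have hw'e' : w - x = (2⁻¹:ℝ) • w' := hw'e.symm
      have hwx' : w = x + (2⁻¹:ℝ) • w' := by rw [← hw'e']; abel
      rw [hwe, hwx']
      rw [smul_add, smul_smul, ← pow_succ, add_assoc]
  -- every point of U lies in F
  have hUF : U ⊆ (F : Set X) := by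
    intro u hu
    choose f hfF w hwU hwe using key u hu
    have hsmul0 : Filter.Tendsto (fun n : ℕ => ((2:ℝ)⁻¹) ^ n • w n) Filter.atTop (nhds 0) := by
      rw [Filter.tendsto_def]
      intro V hV
      obtain ⟨ε, hε, hεV⟩ := smul_small_compact U hU hV
      have hpow : Filter.Tendsto (fun n : ℕ => ((2:ℝ)⁻¹) ^ n) Filter.atTop (nhds 0) :=
        tendsto_pow_atTop_nhds_zero_of_lt_one (by norm_num) (by norm_num)
      have := (Metric.tendsto_atTop.1 hpow) ε hε
      obtain ⟨N, hN⟩ := this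
      refine Filter.mem_atTop_sets.2 ⟨N, fun n hn => ?_⟩
      have hlt : |((2:ℝ)⁻¹) ^ n| < ε := by
        have h := hN n hn
        rw [Real.dist_eq, sub_zero] at h
        exact h
      exact hεV _ hlt _ (hwU n)
    have hftend : Filter.Tendsto f Filter.atTop (nhds u) := by
      have : f = fun n => u - ((2:ℝ)⁻¹) ^ n • w n := by
        funext n
        rw [hwe n]
        abel
      rw [this]
      simpa using (tendsto_const_nhds.sub hsmul0)
    exact hFclosed.mem_of_tendsto hftend (Filter.Eventually.of_forall hfF)
  -- F absorbs, hence F = ⊤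
  have hFtop : F = ⊤ := by
    rw [Submodule.eq_top_iff']
    intro x
    have hc : Filter.Tendsto (fun c : ℝ => c • x) (nhds 0) (nhds (0:X)) := by
      have : Continuous fun c : ℝ => c • x := continuous_id.smul continuous_const
      simpa using this.tendsto 0
    have hev : ∀ᶠ c : ℝ in nhds 0, c • x ∈ U := hc.eventually_mem h0
    have hev' : ∀ᶠ c : ℝ in nhdsWithin 0 {(0:ℝ)}ᶜ, c • x ∈ U :=
      hev.filter_mono nhdsWithin_le_nhds
    obtain ⟨c, hcU, hc0⟩ := (hev'.and (eventually_mem_nhdsWithin)).exists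
    have hc0' : c ≠ 0 := hc0
    have : c • x ∈ F := hUF hcU
    have := F.smul_mem c⁻¹ this
    rwa [smul_smul, inv_mul_cancel₀ hc0', one_smul] at this
  exact (LinearEquiv.ofTop F hFtop).finiteDimensional

/-- In an infinite-dimensional space, for a compact set `C` there is a direction `v`
which leaves `C` at arbitrarily small scales. -/
lemma exists_direction [CompleteSpace X] (hinf : ¬ FiniteDimensional ℝ X)
    (C : Set X) (hC : IsCompact C) :
    ∃ v : X, ∀ δ > (0:ℝ), ∃ s : ℝ, 0 < s ∧ s < δ ∧ s • v ∉ C := by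
  by_contra h
  push_neg at h
  -- X is covered by dilates of C
  have hcov : ⋃ n : ℕ, (fun y : X => ((n:ℝ)+1) • y) '' C = Set.univ := by
    rw [Set.eq_univ_iff_forall]
    intro v
    obtain ⟨δ, hδ, hall⟩ := h v
    obtain ⟨n, hn⟩ := exists_nat_gt (1/δ)
    have hn1 : (1:ℝ)/δ < (n:ℝ) + 1 := lt_of_lt_of_le hn (by linarith)
    have hpos : (0:ℝ) < (n:ℝ) + 1 := by positivity
    set s : ℝ := ((n:ℝ)+1)⁻¹ with hs
    have hs0 : 0 < s := by positivity
    have h1 : ((n:ℝ)+1) * s = 1 := mul_inv_cancel₀ (ne_of_gt hpos)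
    have hsδ : s < δ := by
      by_contra hsd
      push_neg at hsd
      have h2 : (1/δ) * δ < (((n:ℝ)+1)) * δ := mul_lt_mul_of_pos_right hn1 hδ
      rw [one_div, inv_mul_cancel₀ (ne_of_gt hδ)] at h2
      have h3 : ((n:ℝ)+1) * δ ≤ ((n:ℝ)+1) * s := mul_le_mul_of_nonneg_left hsd (le_of_lt hpos)
      rw [h1] at h3
      linarith
    have hmem : s • v ∈ C := hall s hs0 hsδ
    refine Set.mem_iUnion.2 ⟨n, s • v, hmem, ?_⟩
    show ((n:ℝ)+1) • (s • v) = v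
    rw [smul_smul, hs, mul_inv_cancel₀ (ne_of_gt hpos), one_smul]
  have : Nonempty X := ⟨0⟩
  obtain ⟨m, x, hx⟩ := nonempty_interior_of_iUnion_of_closed
    (fun n : ℕ => ((hC.image (continuous_const_smul ((n:ℝ)+1))).isClosed)) hcov
  -- so C has nonempty interior
  have hmpos : ((m:ℝ)+1) ≠ 0 := by positivity
  set hmeo : X ≃ₜ X := Homeomorph.smulOfNeZero ((m:ℝ)+1) hmpos with hhmeo
  have himg : (fun y : X => ((m:ℝ)+1) • y) '' C = hmeo '' C := rfl
  rw [himg, ← hmeo.image_interior] at hx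
  obtain ⟨c0, hc0, _⟩ := hx
  -- translate to get a compact neighborhood of 0
  set trans : X ≃ₜ X := Homeomorph.addRight (-c0) with htrans
  have hUcomp : IsCompact (trans '' C) := hC.image trans.continuous
  have hU0 : trans '' C ∈ nhds (0:X) := by
    rw [← mem_interior_iff_mem_nhds, ← trans.image_interior]
    exact ⟨c0, hc0, by simp [htrans]⟩
  exact hinf (riesz_of_compact_nhds (trans '' C) hUcomp hU0)

end Aux

theorem compact_shy {X : Type*} [AddCommGroup X] [Module ℝ X] [MetricSpace X] [CompleteSpace X]
    [IsTopologicalAddGroup X] [ContinuousSMul ℝ X] [MeasurableSpace X] [BorelSpace X]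
    (hinf : ¬ FiniteDimensional ℝ X) (K : Set X) (hK : IsCompact K) : IsShy K := by
  classical
  set C : Set X := (fun p : X × X => p.1 - p.2) '' (K ×ˢ K) with hC
  have hCcomp : IsCompact C := (hK.prod hK).image (continuous_fst.sub continuous_snd)
  obtain ⟨v, hv⟩ := exists_direction hinf C hCcomp
  set f : ℝ → X := fun t => t • v with hf
  have hfc : Continuous f := continuous_id.smul continuous_const
  set μ : Measure X := Measure.map f (volume.restrict (Set.Icc 0 1)) with hμ
  refine ⟨K, subset_rfl, hK.isClosed.measurableSet, μ, ?_, ?_, ?_⟩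
  · constructor
    rw [hμ, Measure.map_apply hfc.measurable MeasurableSet.univ]
    simp [Real.volume_Icc]
  · refine ⟨f '' Set.Icc 0 1, isCompact_Icc.image hfc, ?_⟩
    have hKc : IsCompact (f '' Set.Icc 0 1) := isCompact_Icc.image hfc
    rw [hμ, Measure.map_apply hfc.measurable hKc.isClosed.measurableSet.compl,
      Measure.restrict_apply (hfc.measurable hKc.isClosed.measurableSet.compl)]
    convert measure_empty
    · rw [Set.eq_empty_iff_forall_notMem]
      rintro t ⟨htc, htI⟩
      exact htc (Set.mem_image_of_mem f htI)
    · infer_instance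
  · intro x
    set S : Set X := (· + x) '' K with hS
    have hScomp : IsCompact S := hK.image (by continuity)
    have hSmeas : MeasurableSet S := hScomp.isClosed.measurableSet
    rw [hμ, Measure.map_apply hfc.measurable hSmeas,
      Measure.restrict_apply (hfc.measurable hSmeas)]
    by_contra hA
    set A : Set ℝ := f ⁻¹' S ∩ Set.Icc 0 1 with hAdef
    have hApos : 0 < volume A := lt_of_le_of_ne zero_le (Ne.symm hA)
    have hAmeas : MeasurableSet A :=
      (hfc.measurable hSmeas).inter measurableSet_Icc
    have hst := MeasureTheory.Measure.sub_mem_nhds_zero_of_addHaar_pos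
      (volume : Measure ℝ) A hAmeas hApos
    obtain ⟨δ, hδ, hball⟩ := Metric.mem_nhds_iff.1 hst
    obtain ⟨s, hs0, hsδ, hsC⟩ := hv δ hδ
    have hsmem : s ∈ A - A := hball (by simpa [Real.dist_eq, abs_of_pos hs0] using hsδ)
    rw [Set.mem_sub] at hsmem
    obtain ⟨t1, ht1, t2, ht2, hts⟩ := hsmem
    obtain ⟨k1, hk1, e1⟩ := ht1.1
    obtain ⟨k2, hk2, e2⟩ := ht2.1
    refine hsC ⟨(k1, k2), ⟨hk1, hk2⟩, ?_⟩
    have h1 : k1 + x = t1 • v := e1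
    have h2 : k2 + x = t2 • v := e2
    show k1 - k2 = s • v
    rw [← hts, sub_smul, ← h1, ← h2]
    abel
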